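/- For every real ν > 0 and every y > 0, the modified Bessel function of the second kind satisfies K_ν(y)/K_{ν+1}(y) < (√(y² + ν²) − ν)/y. -/

import Mathlib

open MeasureTheory Real Set Filter

/-- The modified Bessel function of the second kind (Macdonald function),
via its integral representation `K_ν(y) = ∫_0^∞ exp(-y cosh t) cosh(ν t) dt`. -/
noncomputable def besselK (ν y : ℝ) : ℝ :=
  ∫ t in Set.Ioi (0 : ℝ), Real.exp (-y * Real.cosh t) * Real.cosh (ν * t)

lemma aux_cosh_lower {t : ℝ} (ht : 0 ≤ t) : 1 + t^2/2 ≤ Real.cosh t := by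
  have h1 : t/2 ≤ Real.sinh (t/2) := Real.self_le_sinh_iff.mpr (by linarith)
  have h2 : Real.cosh (t/2 + t/2) = Real.cosh (t/2) * Real.cosh (t/2)
      + Real.sinh (t/2) * Real.sinh (t/2) := Real.cosh_add _ _
  have h3 : Real.cosh (t/2)^2 = Real.sinh (t/2)^2 + 1 := Real.cosh_sq _
  have ht2 : t/2 + t/2 = t := by ring
  rw [ht2] at h2
  nlinarith [h1, h2, h3]

lemma aux_cosh_le_exp (x : ℝ) : Real.cosh x ≤ Real.exp |x| := by
  rw [Real.cosh_eq]
  have h1 : Real.exp x ≤ Real.exp |x| := Real.exp_le_exp.mpr (le_abs_self x)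
  have h2 : Real.exp (-x) ≤ Real.exp |x| := Real.exp_le_exp.mpr (neg_le_abs x)
  linarith

/-- Master pointwise bound. -/
lemma aux_master {y c t : ℝ} (hy : 0 < y) (hc : 0 ≤ c) (ht : 0 ≤ t) :
    Real.exp (-y * Real.cosh t) * Real.exp (c * t)
      ≤ Real.exp (c^2/y) * Real.exp (-(y/4) * t^2) := by
  rw [← Real.exp_add, ← Real.exp_add, Real.exp_le_exp]
  have h1 : 1 + t^2/2 ≤ Real.cosh t := aux_cosh_lower ht
  have h2 : y * (c*t) ≤ c^2 + y^2*t^2/4 := by nlinarith [sq_nonneg (y*t - 2*c)]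
  have h3 : c*t ≤ c^2/y + y*t^2/4 := by
    rw [← sub_nonneg]
    have e : c^2/y + y*t^2/4 - c*t = (c^2 + y^2*t^2/4 - y*(c*t))/y := by
      field_simp
    rw [e]
    exact div_nonneg (by linarith) hy.le
  nlinarith [mul_le_mul_of_nonneg_left h1 hy.le]

lemma contK (ν y : ℝ) : Continuous (fun t => Real.exp (-y * Real.cosh t) * Real.cosh (ν * t)) := by
  fun_prop

/-- bound for the K integrand -/
lemma aux_bound (ν y : ℝ) (hy : 0 < y) {t : ℝ} (ht : 0 ≤ t) :
    ‖Real.exp (-y * Real.cosh t) * Real.cosh (ν * t)‖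
      ≤ Real.exp (|ν|^2/y) * Real.exp (-(y/4) * t^2) := by
  rw [norm_mul, Real.norm_eq_abs, Real.norm_eq_abs, abs_of_pos (Real.exp_pos _),
    abs_of_pos (Real.cosh_pos _)]
  have h1 : Real.cosh (ν*t) ≤ Real.exp (|ν| * t) := by
    calc Real.cosh (ν*t) = Real.cosh |ν*t| := (Real.cosh_abs _).symm
    _ ≤ Real.exp |(|ν*t|)| := aux_cosh_le_exp _
    _ = Real.exp (|ν| * t) := by rw [abs_abs, abs_mul, abs_of_nonneg ht]
  calc Real.exp (-y * Real.cosh t) * Real.cosh (ν*t)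
      ≤ Real.exp (-y * Real.cosh t) * Real.exp (|ν| * t) :=
        mul_le_mul_of_nonneg_left h1 (Real.exp_pos _).le
    _ ≤ _ := aux_master hy (abs_nonneg ν) ht

lemma integrableK (ν y : ℝ) (hy : 0 < y) :
    IntegrableOn (fun t => Real.exp (-y * Real.cosh t) * Real.cosh (ν * t)) (Set.Ioi 0) := by
  refine Integrable.mono'
    (g := fun t => Real.exp (|ν|^2/y) * Real.exp (-(y/4) * t^2)) ?_
    (contK ν y).aestronglyMeasurable.restrict ?_
  · exact ((integrable_exp_neg_mul_sq (by positivity : (0:ℝ) < y/4)).const_mul _).integrableOn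
  · filter_upwards [ae_restrict_mem measurableSet_Ioi] with t ht
    exact aux_bound ν y hy (le_of_lt ht)

lemma besselK_pos (ν y : ℝ) (hy : 0 < y) : 0 < besselK ν y := by
  rw [besselK, setIntegral_pos_iff_support_of_nonneg_ae]
  · have : Function.support (fun t => Real.exp (-y * Real.cosh t) * Real.cosh (ν * t)) = Set.univ := by
      ext t; simp [Function.mem_support, (Real.exp_pos _).ne', (Real.cosh_pos _).ne']
    rw [this, Set.univ_inter]
    simp [Real.volume_Ioi]
  · filter_upwards with t
    positivity
  · exact integrableK ν y hy

lemma aux_prodsinh (ν t : ℝ) : Real.sinh t * Real.sinh (ν*t)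
    = (Real.cosh ((ν+1)*t) - Real.cosh ((ν-1)*t))/2 := by
  have h1 : (ν+1)*t = ν*t + t := by ring
  have h2 : (ν-1)*t = ν*t - t := by ring
  rw [h1, h2, Real.cosh_add, Real.cosh_sub]; ring

/-- recurrence: y K_{ν+1} = y K_{ν-1} + 2 ν K_ν -/
lemma besselK_recurrence (ν y : ℝ) (hy : 0 < y) :
    y * besselK (ν+1) y = y * besselK (ν-1) y + 2*ν*besselK ν y := by
  set F : ℝ → ℝ := fun t => Real.exp (-y * Real.cosh t) * Real.sinh (ν * t) with hF
  set G : ℝ → ℝ := fun t => ν * (Real.exp (-y * Real.cosh t) * Real.cosh (ν*t))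
      - (y/2) * (Real.exp (-y * Real.cosh t) * Real.cosh ((ν+1)*t))
      + (y/2) * (Real.exp (-y * Real.cosh t) * Real.cosh ((ν-1)*t)) with hG
  have hderiv : ∀ t ∈ Set.Ici (0:ℝ), HasDerivAt F (G t) t := by
    intro t _
    have h1 : HasDerivAt (fun t => -y * Real.cosh t) (-y * Real.sinh t) t :=
      (Real.hasDerivAt_cosh t).const_mul (-y)
    have h2 : HasDerivAt (fun t => Real.exp (-y * Real.cosh t))
        (Real.exp (-y * Real.cosh t) * (-y * Real.sinh t)) t := h1.exp
    have h3 : HasDerivAt (fun t : ℝ => Real.sinh (ν * t)) (Real.cosh (ν*t) * ν) t := by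
      have := (Real.hasDerivAt_sinh (ν*t)).comp t ((hasDerivAt_id t).const_mul ν)
      simpa [mul_comm, Function.comp_def] using this
    have h4 := h2.mul h3
    refine h4.congr_deriv (Eq.symm ?_)
    have hps := aux_prodsinh ν t
    simp only [hG]
    linear_combination (y * Real.exp (-y * Real.cosh t)) * hps
  have hint : IntegrableOn G (Set.Ioi 0) := by
    apply Integrable.add
    · exact ((integrableK ν y hy).const_mul _).sub ((integrableK (ν+1) y hy).const_mul _)
    · exact (integrableK (ν-1) y hy).const_mul _
  have htend : Tendsto F atTop (nhds 0) := by
    apply squeeze_zero_norm' (a := fun t => Real.exp (|ν|^2/y) * Real.exp (-(y/4) * t^2))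
    · filter_upwards [eventually_ge_atTop (0:ℝ)] with t ht
      have h1 : |Real.sinh (ν*t)| ≤ Real.cosh (ν*t) := by
        nlinarith [Real.cosh_sq (ν*t), abs_nonneg (Real.sinh (ν*t)), Real.cosh_pos (ν*t),
          sq_abs (Real.sinh (ν*t))]
      calc ‖F t‖ = Real.exp (-y * Real.cosh t) * |Real.sinh (ν*t)| := by
            rw [hF]; simp [abs_mul, abs_of_pos (Real.exp_pos _)]
        _ ≤ Real.exp (-y * Real.cosh t) * Real.cosh (ν*t) :=
            mul_le_mul_of_nonneg_left h1 (Real.exp_pos _).le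
        _ ≤ _ := by
            have := aux_bound ν y hy ht
            rwa [norm_mul, Real.norm_eq_abs, Real.norm_eq_abs, abs_of_pos (Real.exp_pos _),
              abs_of_pos (Real.cosh_pos _)] at this
    · rw [show (0:ℝ) = Real.exp (|ν|^2/y) * 0 by ring]
      apply Tendsto.const_mul
      apply Real.tendsto_exp_atBot.comp
      have h2 : Tendsto (fun t:ℝ => (y/4) * t^2) atTop atTop :=
        (tendsto_pow_atTop (two_ne_zero)).const_mul_atTop (by positivity)
      exact (tendsto_neg_atTop_atBot.comp h2).congr (fun x => by simp [Function.comp])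
  have key := integral_Ioi_of_hasDerivAt_of_tendsto' hderiv hint htend
  have hF0 : F 0 = 0 := by simp [hF]
  rw [hF0, sub_zero] at key
  have i1 := (integrableK ν y hy).const_mul ν
  have i2 := (integrableK (ν+1) y hy).const_mul (y/2)
  have i3 := (integrableK (ν-1) y hy).const_mul (y/2)
  have expand : ∫ t in Set.Ioi (0:ℝ), G t
      = ν * besselK ν y - (y/2) * besselK (ν+1) y + (y/2) * besselK (ν-1) y := by
    have e1 : ∫ t in Set.Ioi (0:ℝ), G t
        = (∫ t in Set.Ioi (0:ℝ), (ν * (Real.exp (-y * Real.cosh t) * Real.cosh (ν*t))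
            - (y/2) * (Real.exp (-y * Real.cosh t) * Real.cosh ((ν+1)*t))))
          + ∫ t in Set.Ioi (0:ℝ), (y/2) * (Real.exp (-y * Real.cosh t) * Real.cosh ((ν-1)*t)) :=
      integral_add (i1.sub i2) i3
    have e2 : (∫ t in Set.Ioi (0:ℝ), (ν * (Real.exp (-y * Real.cosh t) * Real.cosh (ν*t))
            - (y/2) * (Real.exp (-y * Real.cosh t) * Real.cosh ((ν+1)*t))))
        = (∫ t in Set.Ioi (0:ℝ), ν * (Real.exp (-y * Real.cosh t) * Real.cosh (ν*t)))
          - ∫ t in Set.Ioi (0:ℝ), (y/2) * (Real.exp (-y * Real.cosh t) * Real.cosh ((ν+1)*t)) :=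
      integral_sub i1 i2
    rw [e1, e2, integral_const_mul, integral_const_mul, integral_const_mul]
    rfl
  rw [expand] at key
  linarith

/-- Cauchy–Schwarz for integrals. -/
lemma aux_CS {α : Type*} [MeasurableSpace α] (μ : Measure α) (f g : α → ℝ)
    (hf2 : Integrable (fun x => f x^2) μ) (hg2 : Integrable (fun x => g x^2) μ)
    (hfg : Integrable (fun x => f x * g x) μ) :
    (∫ x, f x * g x ∂μ)^2 ≤ (∫ x, f x^2 ∂μ) * (∫ x, g x^2 ∂μ) := by
  set A := ∫ x, f x^2 ∂μ
  set B := ∫ x, g x^2 ∂μ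
  set L := ∫ x, f x * g x ∂μ
  have hA : 0 ≤ A := integral_nonneg fun x => sq_nonneg _
  have hB : 0 ≤ B := integral_nonneg fun x => sq_nonneg _
  rcases eq_or_lt_of_le hB with hB0 | hB0
  · -- B = 0, then g = 0 a.e., hence L = 0
    have hg0 : (fun x => g x^2) =ᵐ[μ] 0 :=
      (integral_eq_zero_iff_of_nonneg (fun x => sq_nonneg _) hg2).mp hB0.symm
    have hL : L = 0 := by
      rw [show L = ∫ x, f x * g x ∂μ from rfl]
      rw [integral_eq_zero_iff_of_nonneg_ae]
      · filter_upwards [hg0] with x hx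
        have : g x = 0 := by
          have : g x ^ 2 = 0 := hx
          exact pow_eq_zero_iff two_ne_zero |>.mp this
        simp [this]
      · filter_upwards [hg0] with x hx
        have : g x = 0 := pow_eq_zero_iff two_ne_zero |>.mp hx
        simp [this]
      · exact hfg
    rw [hL, ← hB0]
    simp
  · have key : 0 ≤ A - 2*(L/B)*L + (L/B)^2 * B := by
      have h0 : 0 ≤ ∫ x, (f x - (L/B) * g x)^2 ∂μ := integral_nonneg fun x => sq_nonneg _
      have hexp : ∀ x, (f x - (L/B) * g x)^2
          = f x^2 - (2*(L/B)) * (f x * g x) + (L/B)^2 * g x^2 := fun x => by ring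
      rw [integral_congr_ae (Filter.Eventually.of_forall hexp)] at h0
      have ia : Integrable (fun x => f x^2 - (2*(L/B)) * (f x * g x)) μ :=
        hf2.sub (hfg.const_mul _)
      have e1 : ∫ a, (f a^2 - (2*(L/B)) * (f a * g a)) + (L/B)^2 * g a^2 ∂μ
          = (∫ a, (f a^2 - (2*(L/B)) * (f a * g a)) ∂μ) + ∫ a, (L/B)^2 * g a^2 ∂μ :=
        integral_add ia (hg2.const_mul _)
      have e2 : ∫ a, (f a^2 - (2*(L/B)) * (f a * g a)) ∂μ
          = (∫ a, f a^2 ∂μ) - (2*(L/B)) * ∫ a, f a * g a ∂μ := by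
        rw [integral_sub hf2 (hfg.const_mul _), integral_const_mul]
      rw [e1, e2, integral_const_mul] at h0
      linarith
    have e1 : 2*(L/B)*L = 2*(L^2/B) := by field_simp
    have e2 : (L/B)^2 * B = L^2/B := by field_simp
    have hAL : L^2/B ≤ A := by linarith [key, e1 ▸ key]
    calc L^2 = (L^2/B) * B := by field_simp
    _ ≤ A * B := by nlinarith

lemma aux_prodcosh (ν t : ℝ) : Real.cosh ((ν-1)*t) * Real.cosh ((ν+1)*t)
    = Real.cosh (ν*t)^2 + Real.sinh t^2 := by
  have h1 : (ν+1)*t = ν*t + t := by ring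
  have h2 : (ν-1)*t = ν*t - t := by ring
  rw [h1, h2, Real.cosh_add, Real.cosh_sub]
  nlinarith [Real.cosh_sq (ν*t), Real.cosh_sq t]

lemma integrableI (ν y : ℝ) (hy : 0 < y) :
    IntegrableOn (fun t => Real.exp (-y * Real.cosh t)
      * Real.sqrt (Real.cosh ((ν-1)*t) * Real.cosh ((ν+1)*t))) (Set.Ioi 0) := by
  refine Integrable.mono'
    (g := fun t => (1/2) * (Real.exp (-y * Real.cosh t) * Real.cosh ((ν-1)*t)
      + Real.exp (-y * Real.cosh t) * Real.cosh ((ν+1)*t))) ?_ ?_ ?_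
  · exact (((integrableK (ν-1) y hy).add (integrableK (ν+1) y hy)).const_mul _)
  · exact (Continuous.aestronglyMeasurable (by fun_prop)).restrict
  · filter_upwards with t
    have ha := (Real.cosh_pos ((ν-1)*t)).le
    have hb := (Real.cosh_pos ((ν+1)*t)).le
    have hsq : Real.cosh ((ν-1)*t) * Real.cosh ((ν+1)*t)
        ≤ ((Real.cosh ((ν-1)*t) + Real.cosh ((ν+1)*t))/2)^2 := by
      nlinarith [sq_nonneg (Real.cosh ((ν-1)*t) - Real.cosh ((ν+1)*t))]
    have h1 : Real.sqrt (Real.cosh ((ν-1)*t) * Real.cosh ((ν+1)*t))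
        ≤ (Real.cosh ((ν-1)*t) + Real.cosh ((ν+1)*t))/2 := by
      calc Real.sqrt (Real.cosh ((ν-1)*t) * Real.cosh ((ν+1)*t))
          ≤ Real.sqrt (((Real.cosh ((ν-1)*t) + Real.cosh ((ν+1)*t))/2)^2) :=
            Real.sqrt_le_sqrt hsq
        _ = (Real.cosh ((ν-1)*t) + Real.cosh ((ν+1)*t))/2 :=
            Real.sqrt_sq (by positivity)
    rw [Real.norm_eq_abs, abs_of_nonneg (by positivity)]
    calc Real.exp (-y * Real.cosh t) * Real.sqrt (Real.cosh ((ν-1)*t) * Real.cosh ((ν+1)*t))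
        ≤ Real.exp (-y * Real.cosh t) * ((Real.cosh ((ν-1)*t) + Real.cosh ((ν+1)*t))/2) :=
          mul_le_mul_of_nonneg_left h1 (Real.exp_pos _).le
      _ = (1/2) * (Real.exp (-y * Real.cosh t) * Real.cosh ((ν-1)*t)
          + Real.exp (-y * Real.cosh t) * Real.cosh ((ν+1)*t)) := by ring

lemma besselK_turan (ν y : ℝ) (hy : 0 < y) :
    besselK ν y ^ 2 < besselK (ν-1) y * besselK (ν+1) y := by
  set I := ∫ t in Set.Ioi (0:ℝ), Real.exp (-y * Real.cosh t)
    * Real.sqrt (Real.cosh ((ν-1)*t) * Real.cosh ((ν+1)*t)) with hI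
  have hIint := integrableI ν y hy
  have hKint := integrableK ν y hy
  -- step 1 : besselK ν y < I
  have step1 : besselK ν y < I := by
    rw [← sub_pos, hI, besselK, ← integral_sub hIint hKint]
    rw [setIntegral_pos_iff_support_of_nonneg_ae]
    · refine lt_of_lt_of_le (b := volume (Set.Ioi (0:ℝ))) ?_ (measure_mono ?_)
      · rw [Real.volume_Ioi]; simp
      · intro t ht
        refine ⟨?_, ht⟩
        have hst : 0 < Real.sinh t := Real.sinh_pos_iff.mpr ht
        have hlt : Real.cosh (ν*t) < Real.sqrt (Real.cosh ((ν-1)*t) * Real.cosh ((ν+1)*t)) := by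
          rw [aux_prodcosh]
          calc Real.cosh (ν*t) = Real.sqrt (Real.cosh (ν*t)^2) :=
              (Real.sqrt_sq (Real.cosh_pos _).le).symm
            _ < Real.sqrt (Real.cosh (ν*t)^2 + Real.sinh t^2) :=
              Real.sqrt_lt_sqrt (sq_nonneg _) (by nlinarith)
        have : 0 < Real.exp (-y * Real.cosh t) * Real.sqrt (Real.cosh ((ν-1)*t) * Real.cosh ((ν+1)*t))
            - Real.exp (-y * Real.cosh t) * Real.cosh (ν*t) := by
          have := mul_lt_mul_of_pos_left hlt (Real.exp_pos (-y * Real.cosh t))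
          linarith
        simp only [Function.mem_support]
        exact ne_of_gt this
    · filter_upwards [MeasureTheory.ae_restrict_mem measurableSet_Ioi] with t ht
      have hst : 0 < Real.sinh t := Real.sinh_pos_iff.mpr ht
      have hle : Real.cosh (ν*t) ≤ Real.sqrt (Real.cosh ((ν-1)*t) * Real.cosh ((ν+1)*t)) := by
        rw [aux_prodcosh]
        calc Real.cosh (ν*t) = Real.sqrt (Real.cosh (ν*t)^2) :=
            (Real.sqrt_sq (Real.cosh_pos _).le).symm
          _ ≤ Real.sqrt (Real.cosh (ν*t)^2 + Real.sinh t^2) :=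
            Real.sqrt_le_sqrt (by nlinarith)
      have := mul_le_mul_of_nonneg_left hle (Real.exp_pos (-y * Real.cosh t)).le
      show (0:ℝ) ≤ _ - _
      linarith
    · exact hIint.sub hKint
  -- step 2 : I ^ 2 ≤ besselK (ν-1) y * besselK (ν+1) y  (Cauchy-Schwarz)
  have step2 : I^2 ≤ besselK (ν-1) y * besselK (ν+1) y := by
    set f : ℝ → ℝ := fun t => Real.exp (-(y/2) * Real.cosh t) * Real.sqrt (Real.cosh ((ν-1)*t))
    set g : ℝ → ℝ := fun t => Real.exp (-(y/2) * Real.cosh t) * Real.sqrt (Real.cosh ((ν+1)*t))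
    have hfsq : ∀ t, f t ^ 2 = Real.exp (-y * Real.cosh t) * Real.cosh ((ν-1)*t) := by
      intro t
      have h1 : Real.sqrt (Real.cosh ((ν-1)*t)) ^ 2 = Real.cosh ((ν-1)*t) :=
        Real.sq_sqrt (Real.cosh_pos _).le
      have h2 : Real.exp (-(y/2) * Real.cosh t) ^ 2 = Real.exp (-y * Real.cosh t) := by
        rw [sq, ← Real.exp_add]; congr 1; ring
      simp only [f, mul_pow, h1, h2]
    have hgsq : ∀ t, g t ^ 2 = Real.exp (-y * Real.cosh t) * Real.cosh ((ν+1)*t) := by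
      intro t
      have h1 : Real.sqrt (Real.cosh ((ν+1)*t)) ^ 2 = Real.cosh ((ν+1)*t) :=
        Real.sq_sqrt (Real.cosh_pos _).le
      have h2 : Real.exp (-(y/2) * Real.cosh t) ^ 2 = Real.exp (-y * Real.cosh t) := by
        rw [sq, ← Real.exp_add]; congr 1; ring
      simp only [g, mul_pow, h1, h2]
    have hfg : ∀ t, f t * g t = Real.exp (-y * Real.cosh t)
        * Real.sqrt (Real.cosh ((ν-1)*t) * Real.cosh ((ν+1)*t)) := by
      intro t
      have h2 : Real.exp (-(y/2) * Real.cosh t) * Real.exp (-(y/2) * Real.cosh t)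
          = Real.exp (-y * Real.cosh t) := by rw [← Real.exp_add]; congr 1; ring
      have h3 : Real.sqrt (Real.cosh ((ν-1)*t)) * Real.sqrt (Real.cosh ((ν+1)*t))
          = Real.sqrt (Real.cosh ((ν-1)*t) * Real.cosh ((ν+1)*t)) :=
        (Real.sqrt_mul (Real.cosh_pos _).le _).symm
      simp only [f, g]
      rw [← h2, ← h3]; ring
    have if2 : Integrable (fun t => f t^2) ((volume : Measure ℝ).restrict (Set.Ioi 0)) :=
      (integrableK (ν-1) y hy).congr (Filter.Eventually.of_forall fun t => (hfsq t).symm)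
    have ig2 : Integrable (fun t => g t^2) ((volume : Measure ℝ).restrict (Set.Ioi 0)) :=
      (integrableK (ν+1) y hy).congr (Filter.Eventually.of_forall fun t => (hgsq t).symm)
    have ifg : Integrable (fun t => f t * g t) ((volume : Measure ℝ).restrict (Set.Ioi 0)) :=
      (integrableI ν y hy).congr (Filter.Eventually.of_forall fun t => (hfg t).symm)
    have CS := aux_CS ((volume : Measure ℝ).restrict (Set.Ioi 0)) f g if2 ig2 ifg
    have eI : ∫ t in Set.Ioi (0:ℝ), f t * g t = I := by
      rw [hI]; exact integral_congr_ae (Filter.Eventually.of_forall hfg)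
    have eF : ∫ t in Set.Ioi (0:ℝ), f t ^ 2 = besselK (ν-1) y := by
      rw [besselK]; exact integral_congr_ae (Filter.Eventually.of_forall hfsq)
    have eG : ∫ t in Set.Ioi (0:ℝ), g t ^ 2 = besselK (ν+1) y := by
      rw [besselK]; exact integral_congr_ae (Filter.Eventually.of_forall hgsq)
    rw [eI, eF, eG] at CS
    exact CS
  have hK := besselK_pos ν y hy
  nlinarith [step1, step2, hK]

theorem stmt_0 (ν y : ℝ) (hν : 0 < ν) (hy : 0 < y) :
    besselK ν y / besselK (ν + 1) y < (Real.sqrt (y ^ 2 + ν ^ 2) - ν) / y := by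
  set b := besselK ν y with hb
  set c := besselK (ν + 1) y with hc
  have hbpos : 0 < b := besselK_pos ν y hy
  have hcpos : 0 < c := besselK_pos (ν+1) y hy
  have hrec := besselK_recurrence ν y hy
  have hturan := besselK_turan ν y hy
  -- y*b^2 + 2*ν*b*c < y*c^2
  have key : y*b^2 + 2*ν*b*c < y*c^2 := by
    have h1 : y * besselK (ν-1) y = y * c - 2*ν*b := by linarith
    have h2 : y * b^2 < y * (besselK (ν-1) y * c) :=
      (mul_lt_mul_of_pos_left hturan hy)
    have h3 : y * (besselK (ν-1) y * c) = (y * besselK (ν-1) y) * c := by ring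
    nlinarith [h2, h3, h1]
  set s := Real.sqrt (y^2 + ν^2) with hs
  have hs2 : s^2 = y^2 + ν^2 := Real.sq_sqrt (by positivity)
  have hspos : 0 < s := Real.sqrt_pos.mpr (by positivity)
  have hlt : y*b + ν*c < s*c := by
    have hsq : (y*b + ν*c)^2 < (s*c)^2 := by nlinarith [key, mul_pos hy hbpos, hcpos]
    exact lt_of_pow_lt_pow_left₀ 2 (by positivity) hsq
  rw [div_lt_div_iff₀ hcpos hy]
  nlinarith [hlt]
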